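/- In System D, the standard (operational) reduction relation on commands is deterministic: if c ↦ c₁ and c ↦ c₂ then c₁ = c₂. -/
import Mathlib


/-!  System D / System CD: a core, fully dual, multi-discipline sequent
     calculus with user-declared data and codata types (the connectives of
     the core System D — ⊕, ⊗, 0, 1, &, ⅋, ⊤, ⊥, ¬, ∼ and the four families
     of polarity shifts — arise as particular declarations), together with
     native existential and universal type quantifiers. -/

namespace SysD

/-- Evaluation disciplines: call-by-value (+), call-by-name (−),
    call-by-need (lv) and call-by-coneed (ln). -/
inductive Disc : Type
| pos | neg | lv | ln
deriving DecidableEq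

/-- Types: discipline-annotated type variables, declared connectives applied
    to type arguments, and the existential/universal quantifiers. -/
inductive Ty : Type
| tvar : Disc → Nat → Ty
| fcon : Nat → List Ty → Ty
| ex : Disc → Nat → Ty → Ty      -- ∃X:S.A
| all : Disc → Nat → Ty → Ty     -- ∀X:S.A

mutual
  /-- Substitution of a type for a type variable. -/
  def substTy : Ty → Nat → Ty → Ty
  | .tvar S Y, X, B => if Y = X then B else .tvar S Y
  | .fcon F Cs, X, B => .fcon F (substTyList Cs X B)
  | .ex S Y A, X, B => if Y = X then .ex S Y A else .ex S Y (substTy A X B)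
  | .all S Y A, X, B => if Y = X then .all S Y A else .all S Y (substTy A X B)

  def substTyList : List Ty → Nat → Ty → List Ty
  | [], _, _ => []
  | C :: Cs, X, B => substTy C X B :: substTyList Cs X B
end

/-- The signature of a single constructor (for data) or destructor (for
    codata): hidden/private type parameters Ȳ with their kinds, term inputs
    Ā, and coterm inputs B̄.  By convention the declaration's parameters X̄
    are referred to inside the component types as the type variables
    0, …, n−1 and the privates as n, n+1, …. -/
structure ConSig where
  tyArgs : List Disc
  tmArgs : List Ty
  coArgs : List Ty

/-- A (co)data declaration: data F (X̄:k̄) : S with K_i : ∀Ȳᵢ. Āᵢ ⊢ F X̄ | B̄ᵢ,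
    or dually codata G (X̄:k̄) : S with O_i : ∀Ȳᵢ. Āᵢ | G X̄ ⊢ B̄ᵢ. -/
structure Decl where
  isData : Bool
  params : List Disc
  disc : Disc
  sigs : List ConSig

/-- A global environment of declarations. -/
def GEnv : Type := Nat → Option Decl

mutual
  /-- Terms (producers). -/
  inductive Tm : Type
  | var : Nat → Tm
  | mu : Nat → Cmd → Tm                              -- μα.c
  | con : Nat → Nat → List Ty → CoTms → Tms → Tm     -- K_i B̄ ē v̄ of connective F
  | cocase : Branches → Tm                           -- cocase{O X̄ x̄ ᾱ ⇒ c | …}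
  | pack : Ty → Tm → Tm                              -- pack B W : ∃X:S.A
  | lamSpec : Nat → Nat → Cmd → Tm                   -- λ[spec X α].c : ∀X:S.A

  /-- Coterms (consumers). -/
  inductive CoTm : Type
  | covar : Nat → CoTm
  | mut : Nat → Cmd → CoTm                           -- μ̃x.c
  | des : Nat → Nat → List Ty → Tms → CoTms → CoTm   -- O_i B̄ v̄ ē of connective G
  | cases : Branches → CoTm                          -- case{K X̄ ᾱ x̄ ⇒ c | …}
  | spec : Ty → CoTm → CoTm                          -- spec B F : ∀X:S.A
  | casePack : Nat → Nat → Cmd → CoTm                -- μ̃(pack X y).c : ∃X:S.A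

  inductive Tms : Type
  | nil : Tms
  | cons : Tm → Tms → Tms

  inductive CoTms : Type
  | nil : CoTms
  | cons : CoTm → CoTms → CoTms

  /-- A branch binds private type variables, covariables, and variables. -/
  inductive Branch : Type
  | mk : List Nat → List Nat → List Nat → Cmd → Branch

  inductive Branches : Type
  | nil : Branches
  | cons : Branch → Branches → Branches

  /-- Commands, annotated by the discipline of the cut type. -/
  inductive Cmd : Type
  | cut : Tm → Disc → CoTm → Cmd
end

def Branches.get? : Branches → Nat → Option Branch
| .nil, _ => none
| .cons b _, 0 => some b
| .cons _ bs, n+1 => bs.get? n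

/- Substitution of a term for a variable. -/
mutual
  def substVTm : Tm → Nat → Tm → Tm
  | .var y, x, v => if y = x then v else .var y
  | .mu a c, x, v => .mu a (substVCmd c x v)
  | .con F i Bs es vs, x, v => .con F i Bs (substVCoTms es x v) (substVTms vs x v)
  | .cocase brs, x, v => .cocase (substVBrs brs x v)
  | .pack B w, x, v => .pack B (substVTm w x v)
  | .lamSpec X a c, x, v => .lamSpec X a (substVCmd c x v)

  def substVCo : CoTm → Nat → Tm → CoTm
  | .covar b, _, _ => .covar b
  | .mut y c, x, v => if y = x then .mut y c else .mut y (substVCmd c x v)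
  | .des F i Bs vs es, x, v => .des F i Bs (substVTms vs x v) (substVCoTms es x v)
  | .cases brs, x, v => .cases (substVBrs brs x v)
  | .spec B f, x, v => .spec B (substVCo f x v)
  | .casePack X y c, x, v =>
      if y = x then .casePack X y c else .casePack X y (substVCmd c x v)

  def substVTms : Tms → Nat → Tm → Tms
  | .nil, _, _ => .nil
  | .cons t ts, x, v => .cons (substVTm t x v) (substVTms ts x v)

  def substVCoTms : CoTms → Nat → Tm → CoTms
  | .nil, _, _ => .nil
  | .cons e es, x, v => .cons (substVCo e x v) (substVCoTms es x v)

  def substVBr : Branch → Nat → Tm → Branch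
  | .mk tys cvs xs c, x, v =>
      if x ∈ xs then .mk tys cvs xs c else .mk tys cvs xs (substVCmd c x v)

  def substVBrs : Branches → Nat → Tm → Branches
  | .nil, _, _ => .nil
  | .cons b bs, x, v => .cons (substVBr b x v) (substVBrs bs x v)

  def substVCmd : Cmd → Nat → Tm → Cmd
  | .cut t S e, x, v => .cut (substVTm t x v) S (substVCo e x v)
end

/- Substitution of a coterm for a covariable. -/
mutual
  def substETm : Tm → Nat → CoTm → Tm
  | .var y, _, _ => .var y
  | .mu b c, a, e => if b = a then .mu b c else .mu b (substECmd c a e)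
  | .con F i Bs es vs, a, e => .con F i Bs (substECoTms es a e) (substETms vs a e)
  | .cocase brs, a, e => .cocase (substEBrs brs a e)
  | .pack B w, a, e => .pack B (substETm w a e)
  | .lamSpec X b c, a, e =>
      if b = a then .lamSpec X b c else .lamSpec X b (substECmd c a e)

  def substECo : CoTm → Nat → CoTm → CoTm
  | .covar b, a, e => if b = a then e else .covar b
  | .mut y c, a, e => .mut y (substECmd c a e)
  | .des F i Bs vs es, a, e => .des F i Bs (substETms vs a e) (substECoTms es a e)
  | .cases brs, a, e => .cases (substEBrs brs a e)
  | .spec B f, a, e => .spec B (substECo f a e)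
  | .casePack X y c, a, e => .casePack X y (substECmd c a e)

  def substETms : Tms → Nat → CoTm → Tms
  | .nil, _, _ => .nil
  | .cons t ts, a, e => .cons (substETm t a e) (substETms ts a e)

  def substECoTms : CoTms → Nat → CoTm → CoTms
  | .nil, _, _ => .nil
  | .cons e' es, a, e => .cons (substECo e' a e) (substECoTms es a e)

  def substEBr : Branch → Nat → CoTm → Branch
  | .mk tys cvs xs c, a, e =>
      if a ∈ cvs then .mk tys cvs xs c else .mk tys cvs xs (substECmd c a e)

  def substEBrs : Branches → Nat → CoTm → Branches
  | .nil, _, _ => .nil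
  | .cons b bs, a, e => .cons (substEBr b a e) (substEBrs bs a e)

  def substECmd : Cmd → Nat → CoTm → Cmd
  | .cut t S e', a, e => .cut (substETm t a e) S (substECo e' a e)
end

/- Substitution of a type for a type variable in program syntax. -/
mutual
  def substTTm : Tm → Nat → Ty → Tm
  | .var y, _, _ => .var y
  | .mu a c, X, B => .mu a (substTCmd c X B)
  | .con F i Bs es vs, X, B =>
      .con F i (substTyList Bs X B) (substTCoTms es X B) (substTTms vs X B)
  | .cocase brs, X, B => .cocase (substTBrs brs X B)
  | .pack C w, X, B => .pack (substTy C X B) (substTTm w X B)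
  | .lamSpec Y a c, X, B =>
      if Y = X then .lamSpec Y a c else .lamSpec Y a (substTCmd c X B)

  def substTCo : CoTm → Nat → Ty → CoTm
  | .covar b, _, _ => .covar b
  | .mut y c, X, B => .mut y (substTCmd c X B)
  | .des F i Bs vs es, X, B =>
      .des F i (substTyList Bs X B) (substTTms vs X B) (substTCoTms es X B)
  | .cases brs, X, B => .cases (substTBrs brs X B)
  | .spec C f, X, B => .spec (substTy C X B) (substTCo f X B)
  | .casePack Y y c, X, B =>
      if Y = X then .casePack Y y c else .casePack Y y (substTCmd c X B)

  def substTTms : Tms → Nat → Ty → Tms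
  | .nil, _, _ => .nil
  | .cons t ts, X, B => .cons (substTTm t X B) (substTTms ts X B)

  def substTCoTms : CoTms → Nat → Ty → CoTms
  | .nil, _, _ => .nil
  | .cons e es, X, B => .cons (substTCo e X B) (substTCoTms es X B)

  def substTBr : Branch → Nat → Ty → Branch
  | .mk tys cvs xs c, X, B =>
      if X ∈ tys then .mk tys cvs xs c else .mk tys cvs xs (substTCmd c X B)

  def substTBrs : Branches → Nat → Ty → Branches
  | .nil, _, _ => .nil
  | .cons b bs, X, B => .cons (substTBr b X B) (substTBrs bs X B)

  def substTCmd : Cmd → Nat → Ty → Cmd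
  | .cut t S e, X, B => .cut (substTTm t X B) S (substTCo e X B)
end

/-- Iterated substitution of a list of terms for a list of variables. -/
def substVsCmd : Cmd → List Nat → Tms → Cmd
| c, [], _ => c
| c, _, .nil => c
| c, x :: xs, .cons v vs => substVsCmd (substVCmd c x v) xs vs

def substEsCmd : Cmd → List Nat → CoTms → Cmd
| c, [], _ => c
| c, _, .nil => c
| c, a :: as_, .cons e es => substEsCmd (substECmd c a e) as_ es

def substTsCmd : Cmd → List Nat → List Ty → Cmd
| c, [], _ => c
| c, _, [] => c
| c, X :: Xs, B :: Bs => substTsCmd (substTCmd c X B) Xs Bs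

/- Free (co)variables. -/
mutual
  def fvTm : Tm → List Nat
  | .var y => [y]
  | .mu _ c => fvCmd c
  | .con _ _ _ es vs => fvCoTms es ++ fvTms vs
  | .cocase brs => fvBrs brs
  | .pack _ w => fvTm w
  | .lamSpec _ _ c => fvCmd c

  def fvCo : CoTm → List Nat
  | .covar _ => []
  | .mut y c => (fvCmd c).filter (· ≠ y)
  | .des _ _ _ vs es => fvTms vs ++ fvCoTms es
  | .cases brs => fvBrs brs
  | .spec _ f => fvCo f
  | .casePack _ y c => (fvCmd c).filter (· ≠ y)

  def fvTms : Tms → List Nat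
  | .nil => []
  | .cons t ts => fvTm t ++ fvTms ts

  def fvCoTms : CoTms → List Nat
  | .nil => []
  | .cons e es => fvCo e ++ fvCoTms es

  def fvBr : Branch → List Nat
  | .mk _ _ xs c => (fvCmd c).filter (· ∉ xs)

  def fvBrs : Branches → List Nat
  | .nil => []
  | .cons b bs => fvBr b ++ fvBrs bs

  def fvCmd : Cmd → List Nat
  | .cut t _ e => fvTm t ++ fvCo e
end

mutual
  def fcvTm : Tm → List Nat
  | .var _ => []
  | .mu b c => (fcvCmd c).filter (· ≠ b)
  | .con _ _ _ es vs => fcvCoTms es ++ fcvTms vs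
  | .cocase brs => fcvBrs brs
  | .pack _ w => fcvTm w
  | .lamSpec _ b c => (fcvCmd c).filter (· ≠ b)

  def fcvCo : CoTm → List Nat
  | .covar b => [b]
  | .mut _ c => fcvCmd c
  | .des _ _ _ vs es => fcvTms vs ++ fcvCoTms es
  | .cases brs => fcvBrs brs
  | .spec _ f => fcvCo f
  | .casePack _ _ c => fcvCmd c

  def fcvTms : Tms → List Nat
  | .nil => []
  | .cons t ts => fcvTm t ++ fcvTms ts

  def fcvCoTms : CoTms → List Nat
  | .nil => []
  | .cons e es => fcvCo e ++ fcvCoTms es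

  def fcvBr : Branch → List Nat
  | .mk _ cvs _ c => (fcvCmd c).filter (· ∉ cvs)

  def fcvBrs : Branches → List Nat
  | .nil => []
  | .cons b bs => fcvBr b ++ fcvBrs bs

  def fcvCmd : Cmd → List Nat
  | .cut t _ e => fcvTm t ++ fcvCo e
end

/- Weak-head normal terms W and forcing coterms F. -/
mutual
  inductive IsW : Tm → Prop
  | var (x : Nat) : IsW (.var x)
  | con {es : CoTms} {vs : Tms} (F i : Nat) (Bs : List Ty) :
      AllF es → AllW vs → IsW (.con F i Bs es vs)
  | cocase (brs : Branches) : IsW (.cocase brs)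
  | pack {w : Tm} (B : Ty) : IsW w → IsW (.pack B w)
  | lamSpec (X a : Nat) (c : Cmd) : IsW (.lamSpec X a c)

  inductive AllW : Tms → Prop
  | nil : AllW .nil
  | cons {t : Tm} {ts : Tms} : IsW t → AllW ts → AllW (.cons t ts)

  inductive IsF : CoTm → Prop
  | covar (a : Nat) : IsF (.covar a)
  | des {vs : Tms} {es : CoTms} (F i : Nat) (Bs : List Ty) :
      AllW vs → AllF es → IsF (.des F i Bs vs es)
  | cases (brs : Branches) : IsF (.cases brs)
  | spec {f : CoTm} (B : Ty) : IsF f → IsF (.spec B f)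
  | casePack (X y : Nat) (c : Cmd) : IsF (.casePack X y c)

  inductive AllF : CoTms → Prop
  | nil : AllF .nil
  | cons {e : CoTm} {es : CoTms} : IsF e → AllF es → AllF (.cons e es)
end

/-- Heap contexts: stacks of delayed call-by-need variable bindings and
    call-by-coneed covariable bindings:
    H ::= □ | ⟨v ‖ μ̃x.H⟩ (at lv) | ⟨μα.H ‖ e⟩ (at ln). -/
inductive Heap : Type
| hole : Heap
| lvBind : Tm → Nat → Heap → Heap
| lnBind : Nat → Heap → CoTm → Heap

def Heap.fill : Heap → Cmd → Cmd
| .hole, c => c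
| .lvBind v x H, c => .cut v .lv (.mut x (H.fill c))
| .lnBind a H e, c => .cut (.mu a (H.fill c)) .ln e

def Heap.BindsVar : Heap → Nat → Prop
| .hole, _ => False
| .lvBind _ x H, y => x = y ∨ H.BindsVar y
| .lnBind _ H _, y => H.BindsVar y

def Heap.BindsCovar : Heap → Nat → Prop
| .hole, _ => False
| .lvBind _ _ H, b => H.BindsCovar b
| .lnBind a H _, b => a = b ∨ H.BindsCovar b

/-- Discipline-indexed values:  V₊ = W,  V₋ = any term,  V_lv = W,
    V_ln = W or μα.H[⟨V_ln ‖ α⟩] where H does not rebind α. -/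
inductive Val : Disc → Tm → Prop
| pos {v : Tm} : IsW v → Val .pos v
| neg (v : Tm) : Val .neg v
| lv {v : Tm} : IsW v → Val .lv v
| lnW {v : Tm} : IsW v → Val .ln v
| lnMu {v : Tm} {H : Heap} (a : Nat) :
    Val .ln v → ¬ H.BindsCovar a →
    Val .ln (.mu a (H.fill (.cut v .ln (.covar a))))

/-- Discipline-indexed covalues:  E₊ = any coterm,  E₋ = F,  E_ln = F,
    E_lv = F or μ̃x.H[⟨x ‖ E_lv⟩] where H does not rebind x. -/
inductive Coval : Disc → CoTm → Prop
| pos (e : CoTm) : Coval .pos e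
| neg {e : CoTm} : IsF e → Coval .neg e
| ln {e : CoTm} : IsF e → Coval .ln e
| lvF {e : CoTm} : IsF e → Coval .lv e
| lvMut {e : CoTm} {H : Heap} (x : Nat) :
    Coval .lv e → ¬ H.BindsVar x →
    Coval .lv (.mut x (H.fill (.cut (.var x) .lv e)))

/-- The standard (operational) reduction of System D/CD. -/
inductive Step : Cmd → Cmd → Prop
| betaMu {S : Disc} {e : CoTm} (a : Nat) (c : Cmd) :
    S ≠ .ln → Coval S e →
    Step (.cut (.mu a c) S e) (substECmd c a e)
| betaMut {S : Disc} {v : Tm} (x : Nat) (c : Cmd) :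
    S ≠ .lv → Val S v →
    Step (.cut v S (.mut x c)) (substVCmd c x v)
| betaMuConeed {e : CoTm} (a : Nat) (c : Cmd) :
    Val .ln (.mu a c) → (∀ b, e ≠ .covar b) → Coval .ln e →
    Step (.cut (.mu a c) .ln e) (substECmd c a e)
| betaMutNeed {v : Tm} (x : Nat) (c : Cmd) :
    Coval .lv (.mut x c) → (∀ y, v ≠ .var y) → Val .lv v →
    Step (.cut v .lv (.mut x c)) (substVCmd c x v)
| betaP {es : CoTms} {vs : Tms} {brs : Branches}
    (F i : Nat) (Bs : List Ty) (S : Disc) (tys cvs xs : List Nat) (c : Cmd) :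
    brs.get? i = some (.mk tys cvs xs c) →
    AllF es → AllW vs →
    Step (.cut (.con F i Bs es vs) S (.cases brs))
         (substVsCmd (substEsCmd (substTsCmd c tys Bs) cvs es) xs vs)
| betaQ {vs : Tms} {es : CoTms} {brs : Branches}
    (F i : Nat) (Bs : List Ty) (S : Disc) (tys xs cvs : List Nat) (c : Cmd) :
    brs.get? i = some (.mk tys cvs xs c) →
    AllW vs → AllF es →
    Step (.cut (.cocase brs) S (.des F i Bs vs es))
         (substEsCmd (substVsCmd (substTsCmd c tys Bs) xs vs) cvs es)
| betaPack {w : Tm} (B : Ty) (X y : Nat) (c : Cmd) :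
    IsW w →
    Step (.cut (.pack B w) .pos (.casePack X y c))
         (substVCmd (substTCmd c X B) y w)
| betaSpec {f : CoTm} (B : Ty) (X a : Nat) (c : Cmd) :
    IsF f →
    Step (.cut (.lamSpec X a c) .neg (.spec B f))
         (substECmd (substTCmd c X B) a f)
| heap {c c' : Cmd} (H : Heap) :
    Step c c' → Step (H.fill c) (H.fill c')

/-- A command that admits no standard reduction step. -/
def Irred (c : Cmd) : Prop := ¬ ∃ c', Step c c'

/-- `x` is a needed variable of `c`. -/
def NeededVar (c : Cmd) (x : Nat) : Prop :=
  Irred c ∧ ∃ (H : Heap) (S : Disc) (E : CoTm),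
    Coval S E ∧ ¬ H.BindsVar x ∧ c = H.fill (.cut (.var x) S E)

/-- `a` is a needed covariable of `c`. -/
def NeededCovar (c : Cmd) (a : Nat) : Prop :=
  Irred c ∧ ∃ (H : Heap) (S : Disc) (V : Tm),
    Val S V ∧ ¬ H.BindsCovar a ∧ c = H.fill (.cut V S (.covar a))

/-- A command is finished when it needs some (co)variable. -/
def Finished (c : Cmd) : Prop :=
  Irred c ∧ ∃ z, NeededVar c z ∨ NeededCovar c z

/-- A command is stuck when it cannot step and needs no (co)variable. -/
def Stuck (c : Cmd) : Prop :=
  Irred c ∧ ¬ ∃ z, NeededVar c z ∨ NeededCovar c z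

end SysD

namespace SysD


mutual
  def csize : Cmd → Nat
  | .cut t _ e => tsize t + esize e + 1
  def tsize : Tm → Nat
  | .mu _ c => csize c + 1
  | _ => 0
  def esize : CoTm → Nat
  | .mut _ c => csize c + 1
  | _ => 0
end

/-- Head steps: the standard reduction rules without heap closure. -/
inductive HeadStep : Cmd → Cmd → Prop
| betaMu {S : Disc} {e : CoTm} (a : Nat) (c : Cmd) :
    S ≠ .ln → Coval S e →
    HeadStep (.cut (.mu a c) S e) (substECmd c a e)
| betaMut {S : Disc} {v : Tm} (x : Nat) (c : Cmd) :
    S ≠ .lv → Val S v →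
    HeadStep (.cut v S (.mut x c)) (substVCmd c x v)
| betaMuConeed {e : CoTm} (a : Nat) (c : Cmd) :
    Val .ln (.mu a c) → (∀ b, e ≠ .covar b) → Coval .ln e →
    HeadStep (.cut (.mu a c) .ln e) (substECmd c a e)
| betaMutNeed {v : Tm} (x : Nat) (c : Cmd) :
    Coval .lv (.mut x c) → (∀ y, v ≠ .var y) → Val .lv v →
    HeadStep (.cut v .lv (.mut x c)) (substVCmd c x v)
| betaP {es : CoTms} {vs : Tms} {brs : Branches}
    (F i : Nat) (Bs : List Ty) (S : Disc) (tys cvs xs : List Nat) (c : Cmd) :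
    brs.get? i = some (.mk tys cvs xs c) →
    AllF es → AllW vs →
    HeadStep (.cut (.con F i Bs es vs) S (.cases brs))
         (substVsCmd (substEsCmd (substTsCmd c tys Bs) cvs es) xs vs)
| betaQ {vs : Tms} {es : CoTms} {brs : Branches}
    (F i : Nat) (Bs : List Ty) (S : Disc) (tys xs cvs : List Nat) (c : Cmd) :
    brs.get? i = some (.mk tys cvs xs c) →
    AllW vs → AllF es →
    HeadStep (.cut (.cocase brs) S (.des F i Bs vs es))
         (substEsCmd (substVsCmd (substTsCmd c tys Bs) xs vs) cvs es)
| betaPack {w : Tm} (B : Ty) (X y : Nat) (c : Cmd) :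
    IsW w →
    HeadStep (.cut (.pack B w) .pos (.casePack X y c))
         (substVCmd (substTCmd c X B) y w)
| betaSpec {f : CoTm} (B : Ty) (X a : Nat) (c : Cmd) :
    IsF f →
    HeadStep (.cut (.lamSpec X a c) .neg (.spec B f))
         (substECmd (substTCmd c X B) a f)

def Heap.comp : Heap → Heap → Heap
| .hole, K => K
| .lvBind v x H, K => .lvBind v x (H.comp K)
| .lnBind a H e, K => .lnBind a (H.comp K) e

theorem Heap.fill_comp (H K : Heap) (c : Cmd) :
    (H.comp K).fill c = H.fill (K.fill c) := by
  induction H <;> simp [Heap.comp, Heap.fill, *]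

theorem HeadStep.toStep {d e : Cmd} (h : HeadStep d e) : Step d e := by
  cases h with
  | betaMu a c h1 h2 => exact .betaMu a c h1 h2
  | betaMut x c h1 h2 => exact .betaMut x c h1 h2
  | betaMuConeed a c h1 h2 h3 => exact .betaMuConeed a c h1 h2 h3
  | betaMutNeed x c h1 h2 h3 => exact .betaMutNeed x c h1 h2 h3
  | betaP F i Bs S tys cvs xs c h1 h2 h3 => exact .betaP F i Bs S tys cvs xs c h1 h2 h3
  | betaQ F i Bs S tys xs cvs c h1 h2 h3 => exact .betaQ F i Bs S tys xs cvs c h1 h2 h3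
  | betaPack B X y c h1 => exact .betaPack B X y c h1
  | betaSpec B X a c h1 => exact .betaSpec B X a c h1

theorem step_iff {c c' : Cmd} :
    Step c c' ↔ ∃ (H : Heap) (d e : Cmd),
      HeadStep d e ∧ c = H.fill d ∧ c' = H.fill e := by
  constructor
  · intro h
    induction h with
    | betaMu a c h1 h2 => exact ⟨.hole, _, _, .betaMu a c h1 h2, rfl, rfl⟩
    | betaMut x c h1 h2 => exact ⟨.hole, _, _, .betaMut x c h1 h2, rfl, rfl⟩
    | betaMuConeed a c h1 h2 h3 => exact ⟨.hole, _, _, .betaMuConeed a c h1 h2 h3, rfl, rfl⟩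
    | betaMutNeed x c h1 h2 h3 => exact ⟨.hole, _, _, .betaMutNeed x c h1 h2 h3, rfl, rfl⟩
    | betaP F i Bs S tys cvs xs c h1 h2 h3 =>
        exact ⟨.hole, _, _, .betaP F i Bs S tys cvs xs c h1 h2 h3, rfl, rfl⟩
    | betaQ F i Bs S tys xs cvs c h1 h2 h3 =>
        exact ⟨.hole, _, _, .betaQ F i Bs S tys xs cvs c h1 h2 h3, rfl, rfl⟩
    | betaPack B X y c h1 => exact ⟨.hole, _, _, .betaPack B X y c h1, rfl, rfl⟩
    | betaSpec B X a c h1 => exact ⟨.hole, _, _, .betaSpec B X a c h1, rfl, rfl⟩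
    | heap H h ih =>
        obtain ⟨K, d, e, hs, rfl, rfl⟩ := ih
        exact ⟨H.comp K, d, e, hs, by rw [Heap.fill_comp], by rw [Heap.fill_comp]⟩
  · rintro ⟨H, d, e, hs, rfl, rfl⟩
    exact Step.heap H hs.toStep

theorem IsW.not_mu {a : Nat} {c : Cmd} : ¬ IsW (.mu a c) := fun h => nomatch h
theorem IsF.not_mut {x : Nat} {c : Cmd} : ¬ IsF (.mut x c) := fun h => nomatch h

theorem val_pos {v : Tm} (h : Val .pos v) : IsW v := by cases h with | pos h => exact h
theorem val_lv {v : Tm} (h : Val .lv v) : IsW v := by cases h with | lv h => exact h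
theorem coval_neg {e : CoTm} (h : Coval .neg e) : IsF e := by cases h with | neg h => exact h
theorem coval_ln {e : CoTm} (h : Coval .ln e) : IsF e := by cases h with | ln h => exact h

theorem coval_lv_mut {x : Nat} {c : Cmd} (h : Coval .lv (.mut x c)) :
    ∃ (H : Heap) (E : CoTm), Coval .lv E ∧ ¬ H.BindsVar x ∧
      c = H.fill (.cut (.var x) .lv E) := by
  cases h with
  | lvF hf => exact absurd hf IsF.not_mut
  | lvMut _ hc hH => exact ⟨_, _, hc, hH, rfl⟩

theorem val_ln_mu {a : Nat} {c : Cmd} (h : Val .ln (.mu a c)) :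
    ∃ (H : Heap) (V : Tm), Val .ln V ∧ ¬ H.BindsCovar a ∧
      c = H.fill (.cut V .ln (.covar a)) := by
  cases h with
  | lnW hw => exact absurd hw IsW.not_mu
  | lnMu _ hv hH => exact ⟨_, _, hv, hH, rfl⟩


theorem csize_lt_lv (v : Tm) (z : Nat) (B : Cmd) :
    csize B < csize (.cut v .lv (.mut z B)) := by
  show csize B < tsize v + (csize B + 1) + 1
  omega

theorem csize_lt_ln (b : Nat) (B : Cmd) (e : CoTm) :
    csize B < csize (.cut (.mu b B) .ln e) := by
  show csize B < (csize B + 1) + esize e + 1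
  omega


/-- A command demands at most one variable. -/
theorem uniqVar : ∀ (n x : Nat) (H₁ : Heap) (E₁ : CoTm) (y : Nat) (H₂ : Heap) (E₂ : CoTm),
    csize (H₁.fill (.cut (.var x) .lv E₁)) < n →
    Coval .lv E₁ → ¬ H₁.BindsVar x → Coval .lv E₂ → ¬ H₂.BindsVar y →
    H₁.fill (.cut (.var x) .lv E₁) = H₂.fill (.cut (.var y) .lv E₂) → x = y := by
  intro n
  induction n with
  | zero => intro _ _ _ _ _ _ hn; omega
  | succ n ih =>
    intro x H₁ E₁ y H₂ E₂ hn hE₁ hB₁ hE₂ hB₂ heq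
    cases H₁ with
    | hole =>
      cases H₂ with
      | hole =>
        simp only [Heap.fill, Cmd.cut.injEq, Tm.var.injEq] at heq
        exact heq.1
      | lvBind v z K =>
        simp only [Heap.fill, Cmd.cut.injEq] at heq
        obtain ⟨hv, -, hE⟩ := heq
        subst hE
        obtain ⟨H'', E'', hE'', hB'', heq''⟩ := coval_lv_mut hE₁
        have hzy : z ≠ y := fun h => hB₂ (Or.inl h)
        have hlt : csize (Heap.fill K (.cut (.var y) .lv E₂)) < n := by
          have := csize_lt_lv (.var x) z (Heap.fill K (.cut (.var y) .lv E₂))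
          simp only [Heap.fill] at hn
          omega
        exact absurd (ih y K E₂ z H'' E'' hlt hE₂ (fun h => hB₂ (Or.inr h)) hE''
          hB'' heq'') hzy.symm
      | lnBind b K e => simp [Heap.fill] at heq
    | lvBind v z K =>
      cases H₂ with
      | hole =>
        simp only [Heap.fill, Cmd.cut.injEq] at heq
        obtain ⟨hv, -, hE⟩ := heq
        subst hE
        obtain ⟨H'', E'', hE'', hB'', heq''⟩ := coval_lv_mut hE₂
        have hzx : z ≠ x := fun h => hB₁ (Or.inl h)
        have hlt : csize (Heap.fill K (.cut (.var x) .lv E₁)) < n := by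
          have := csize_lt_lv v z (Heap.fill K (.cut (.var x) .lv E₁))
          simp only [Heap.fill] at hn
          omega
        exact absurd (ih x K E₁ z H'' E'' hlt hE₁ (fun h => hB₁ (Or.inr h)) hE''
          hB'' heq'') hzx.symm
      | lvBind v' z' K' =>
        simp only [Heap.fill, Cmd.cut.injEq, CoTm.mut.injEq] at heq
        obtain ⟨rfl, -, rfl, hin⟩ := heq
        have hlt : csize (Heap.fill K (.cut (.var x) .lv E₁)) < n := by
          have := csize_lt_lv v z (Heap.fill K (.cut (.var x) .lv E₁))
          simp only [Heap.fill] at hn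
          omega
        exact ih x K E₁ y K' E₂ hlt hE₁ (fun h => hB₁ (Or.inr h)) hE₂
          (fun h => hB₂ (Or.inr h)) hin
      | lnBind b K' e => simp [Heap.fill] at heq
    | lnBind b K e =>
      cases H₂ with
      | hole => simp [Heap.fill] at heq
      | lvBind v z K' => simp [Heap.fill] at heq
      | lnBind b' K' e' =>
        simp only [Heap.fill, Cmd.cut.injEq, Tm.mu.injEq] at heq
        obtain ⟨⟨rfl, hin⟩, -, rfl⟩ := heq
        have hlt : csize (Heap.fill K (.cut (.var x) .lv E₁)) < n := by
          have := csize_lt_ln b (Heap.fill K (.cut (.var x) .lv E₁)) e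
          simp only [Heap.fill] at hn
          omega
        exact ih x K E₁ y K' E₂ hlt hE₁ hB₁ hE₂ hB₂ hin


/-- A command demands at most one covariable. -/
theorem uniqCovar : ∀ (n a : Nat) (H₁ : Heap) (V₁ : Tm) (b : Nat) (H₂ : Heap) (V₂ : Tm),
    csize (H₁.fill (.cut V₁ .ln (.covar a))) < n →
    Val .ln V₁ → ¬ H₁.BindsCovar a → Val .ln V₂ → ¬ H₂.BindsCovar b →
    H₁.fill (.cut V₁ .ln (.covar a)) = H₂.fill (.cut V₂ .ln (.covar b)) → a = b := by
  intro n
  induction n with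
  | zero => intro _ _ _ _ _ _ hn; omega
  | succ n ih =>
    intro a H₁ V₁ b H₂ V₂ hn hV₁ hB₁ hV₂ hB₂ heq
    cases H₁ with
    | hole =>
      cases H₂ with
      | hole =>
        simp only [Heap.fill, Cmd.cut.injEq, CoTm.covar.injEq] at heq
        exact heq.2.2
      | lvBind v z K => simp [Heap.fill] at heq
      | lnBind b' K e =>
        simp only [Heap.fill, Cmd.cut.injEq] at heq
        obtain ⟨hV, -, he⟩ := heq
        subst hV
        obtain ⟨H'', V'', hV'', hB'', heq''⟩ := val_ln_mu hV₁
        have hbb : b' ≠ b := fun h => hB₂ (Or.inl h)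
        have hlt : csize (Heap.fill K (.cut V₂ .ln (.covar b))) < n := by
          have := csize_lt_ln b' (Heap.fill K (.cut V₂ .ln (.covar b))) (.covar a)
          simp only [Heap.fill] at hn
          omega
        exact absurd (ih b K V₂ b' H'' V'' hlt hV₂ (fun h => hB₂ (Or.inr h)) hV''
          hB'' heq'') hbb.symm
    | lvBind v z K =>
      cases H₂ with
      | hole => simp [Heap.fill] at heq
      | lvBind v' z' K' =>
        simp only [Heap.fill, Cmd.cut.injEq, CoTm.mut.injEq] at heq
        obtain ⟨rfl, -, rfl, hin⟩ := heq
        have hlt : csize (Heap.fill K (.cut V₁ .ln (.covar a))) < n := by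
          have := csize_lt_lv v z (Heap.fill K (.cut V₁ .ln (.covar a)))
          simp only [Heap.fill] at hn
          omega
        exact ih a K V₁ b K' V₂ hlt hV₁ hB₁ hV₂ hB₂ hin
      | lnBind b' K' e => simp [Heap.fill] at heq
    | lnBind b' K e =>
      cases H₂ with
      | hole =>
        simp only [Heap.fill, Cmd.cut.injEq] at heq
        obtain ⟨hV, -, he⟩ := heq
        have hV' : V₂ = .mu b' (Heap.fill K (.cut V₁ .ln (.covar a))) := hV.symm
        subst hV'
        obtain ⟨H'', V'', hV'', hB'', heq''⟩ := val_ln_mu hV₂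
        have hba : b' ≠ a := fun h => hB₁ (Or.inl h)
        have hlt : csize (Heap.fill K (.cut V₁ .ln (.covar a))) < n := by
          have := csize_lt_ln b' (Heap.fill K (.cut V₁ .ln (.covar a))) e
          simp only [Heap.fill] at hn
          omega
        exact absurd (ih a K V₁ b' H'' V'' hlt hV₁ (fun h => hB₁ (Or.inr h)) hV''
          hB'' heq'') hba.symm
      | lvBind v z K' => simp [Heap.fill] at heq
      | lnBind b'' K' e' =>
        simp only [Heap.fill, Cmd.cut.injEq, Tm.mu.injEq] at heq
        obtain ⟨⟨rfl, hin⟩, -, rfl⟩ := heq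
        have hlt : csize (Heap.fill K (.cut V₁ .ln (.covar a))) < n := by
          have := csize_lt_ln b' (Heap.fill K (.cut V₁ .ln (.covar a))) e
          simp only [Heap.fill] at hn
          omega
        exact ih a K V₁ b K' V₂ hlt hV₁ (fun h => hB₁ (Or.inr h)) hV₂
          (fun h => hB₂ (Or.inr h)) hin

/-- A command cannot demand both a variable and a covariable. -/
theorem uniqMix : ∀ (n x : Nat) (H₁ : Heap) (E₁ : CoTm) (a : Nat) (H₂ : Heap) (V₂ : Tm),
    csize (H₁.fill (.cut (.var x) .lv E₁)) < n →
    Coval .lv E₁ → ¬ H₁.BindsVar x → Val .ln V₂ → ¬ H₂.BindsCovar a →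
    H₁.fill (.cut (.var x) .lv E₁) = H₂.fill (.cut V₂ .ln (.covar a)) → False := by
  intro n
  induction n with
  | zero => intro _ _ _ _ _ _ hn; omega
  | succ n ih =>
    intro x H₁ E₁ a H₂ V₂ hn hE₁ hB₁ hV₂ hB₂ heq
    cases H₁ with
    | hole =>
      cases H₂ with
      | hole => simp [Heap.fill] at heq
      | lvBind v z K =>
        simp only [Heap.fill, Cmd.cut.injEq] at heq
        obtain ⟨hv, -, hE⟩ := heq
        subst hE
        obtain ⟨H'', E'', hE'', hB'', heq''⟩ := coval_lv_mut hE₁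
        have hlt : csize (Heap.fill H'' (.cut (.var z) .lv E'')) < n := by
          have := csize_lt_lv (.var x) z (Heap.fill K (.cut V₂ .ln (.covar a)))
          simp only [Heap.fill] at hn
          rw [← heq'']
          omega
        exact ih z H'' E'' a K V₂ hlt hE'' hB'' hV₂ hB₂ heq''.symm
      | lnBind b K e => simp [Heap.fill] at heq
    | lvBind v z K =>
      cases H₂ with
      | hole => simp [Heap.fill] at heq
      | lvBind v' z' K' =>
        simp only [Heap.fill, Cmd.cut.injEq, CoTm.mut.injEq] at heq
        obtain ⟨rfl, -, rfl, hin⟩ := heq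
        have hlt : csize (Heap.fill K (.cut (.var x) .lv E₁)) < n := by
          have := csize_lt_lv v z (Heap.fill K (.cut (.var x) .lv E₁))
          simp only [Heap.fill] at hn
          omega
        exact ih x K E₁ a K' V₂ hlt hE₁ (fun h => hB₁ (Or.inr h)) hV₂ hB₂ hin
      | lnBind b K' e => simp [Heap.fill] at heq
    | lnBind b K e =>
      cases H₂ with
      | hole =>
        simp only [Heap.fill, Cmd.cut.injEq] at heq
        obtain ⟨hV, -, he⟩ := heq
        have hV' : V₂ = .mu b (Heap.fill K (.cut (.var x) .lv E₁)) := hV.symm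
        subst hV'
        obtain ⟨H'', V'', hV'', hB'', heq''⟩ := val_ln_mu hV₂
        have hlt : csize (Heap.fill K (.cut (.var x) .lv E₁)) < n := by
          have := csize_lt_ln b (Heap.fill K (.cut (.var x) .lv E₁)) e
          simp only [Heap.fill] at hn
          omega
        exact ih x K E₁ b H'' V'' hlt hE₁ hB₁ hV'' hB'' heq''
      | lvBind v z K' => simp [Heap.fill] at heq
      | lnBind b' K' e' =>
        simp only [Heap.fill, Cmd.cut.injEq, Tm.mu.injEq] at heq
        obtain ⟨⟨rfl, hin⟩, -, rfl⟩ := heq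
        have hlt : csize (Heap.fill K (.cut (.var x) .lv E₁)) < n := by
          have := csize_lt_ln b (Heap.fill K (.cut (.var x) .lv E₁)) e
          simp only [Heap.fill] at hn
          omega
        exact ih x K E₁ a K' V₂ hlt hE₁ hB₁ hV₂ (fun h => hB₂ (Or.inr h)) hin


/-- A command that demands a variable admits no head step anywhere. -/
theorem noStepVar : ∀ (n x : Nat) (H : Heap) (E : CoTm),
    csize (H.fill (.cut (.var x) .lv E)) < n →
    Coval .lv E → ¬ H.BindsVar x →
    ∀ (H' : Heap) (d e' : Cmd),
      H.fill (.cut (.var x) .lv E) = H'.fill d → HeadStep d e' → False := by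
  intro n
  induction n with
  | zero => intro _ _ _ _ hn; omega
  | succ n ih =>
    intro x H E hn hE hB H' d e' heq hs
    cases H' with
    | hole =>
      simp only [Heap.fill] at heq
      subst heq
      cases H with
      | hole =>
        cases hs with
        | betaMut y c hS hV => exact hS rfl
        | betaMutNeed y c hcov hne hval => exact hne x rfl
      | lvBind v z K =>
        simp only [Heap.fill] at hs
        have contra : Coval .lv (.mut z (Heap.fill K (.cut (.var x) .lv E))) → False := by
          intro hcov
          obtain ⟨H'', E'', hE'', hB'', heq''⟩ := coval_lv_mut hcov
          have hxz := uniqVar (csize (Heap.fill K (.cut (.var x) .lv E)) + 1)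
            x K E z H'' E'' (Nat.lt_succ_self _) hE (fun h => hB (Or.inr h))
            hE'' hB'' heq''
          exact hB (Or.inl hxz.symm)
        cases hs with
        | betaMu a c hS hcov => exact contra hcov
        | betaMut y c hS hV => exact hS rfl
        | betaMutNeed y c hcov hne hval => exact contra hcov
      | lnBind b K e0 =>
        simp only [Heap.fill] at hs
        have contra : Val .ln (.mu b (Heap.fill K (.cut (.var x) .lv E))) → False := by
          intro hval
          obtain ⟨H'', V'', hV'', hB'', heq''⟩ := val_ln_mu hval
          exact uniqMix (csize (Heap.fill K (.cut (.var x) .lv E)) + 1)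
            x K E b H'' V'' (Nat.lt_succ_self _) hE hB hV'' hB'' heq''
        cases hs with
        | betaMu a c hS hcov => exact hS rfl
        | betaMut y c hS hV => exact contra hV
        | betaMuConeed a c hval hne hcov => exact contra hval
    | lvBind v z K' =>
      cases H with
      | hole =>
        simp only [Heap.fill, Cmd.cut.injEq] at heq
        obtain ⟨hv, -, hEeq⟩ := heq
        subst hEeq
        obtain ⟨H'', E'', hE'', hB'', heq''⟩ := coval_lv_mut hE
        have hlt : csize (Heap.fill H'' (.cut (.var z) .lv E'')) < n := by
          have := csize_lt_lv (.var x) z (Heap.fill K' d)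
          simp only [Heap.fill] at hn
          rw [← heq'']
          omega
        exact ih z H'' E'' hlt hE'' hB'' K' d e' heq''.symm hs
      | lvBind v' z' K =>
        simp only [Heap.fill, Cmd.cut.injEq, CoTm.mut.injEq] at heq
        obtain ⟨rfl, -, rfl, hin⟩ := heq
        have hlt : csize (Heap.fill K (.cut (.var x) .lv E)) < n := by
          have := csize_lt_lv v' z' (Heap.fill K (.cut (.var x) .lv E))
          simp only [Heap.fill] at hn
          omega
        exact ih x K E hlt hE (fun h => hB (Or.inr h)) K' d e' hin hs
      | lnBind b K e0 => simp [Heap.fill] at heq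
    | lnBind b K' e0 =>
      cases H with
      | hole => simp [Heap.fill] at heq
      | lvBind v z K => simp [Heap.fill] at heq
      | lnBind b' K e =>
        simp only [Heap.fill, Cmd.cut.injEq, Tm.mu.injEq] at heq
        obtain ⟨⟨rfl, hin⟩, -, rfl⟩ := heq
        have hlt : csize (Heap.fill K (.cut (.var x) .lv E)) < n := by
          have := csize_lt_ln b' (Heap.fill K (.cut (.var x) .lv E)) e
          simp only [Heap.fill] at hn
          omega
        exact ih x K E hlt hE hB K' d e' hin hs

/-- A command that demands a covariable admits no head step anywhere. -/
theorem noStepCovar : ∀ (n a : Nat) (H : Heap) (V : Tm),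
    csize (H.fill (.cut V .ln (.covar a))) < n →
    Val .ln V → ¬ H.BindsCovar a →
    ∀ (H' : Heap) (d e' : Cmd),
      H.fill (.cut V .ln (.covar a)) = H'.fill d → HeadStep d e' → False := by
  intro n
  induction n with
  | zero => intro _ _ _ _ hn; omega
  | succ n ih =>
    intro a H V hn hV hB H' d e' heq hs
    cases H' with
    | hole =>
      simp only [Heap.fill] at heq
      subst heq
      cases H with
      | hole =>
        cases hs with
        | betaMu b c hS hcov => exact hS rfl
        | betaMuConeed b c hval hne hcov => exact hne a rfl
      | lvBind v z K =>
        simp only [Heap.fill] at hs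
        have contra : Coval .lv (.mut z (Heap.fill K (.cut V .ln (.covar a)))) → False := by
          intro hcov
          obtain ⟨H'', E'', hE'', hB'', heq''⟩ := coval_lv_mut hcov
          exact uniqMix (csize (Heap.fill K (.cut V .ln (.covar a))) + 1)
            z H'' E'' a K V (by rw [← heq'']; exact Nat.lt_succ_self _)
            hE'' hB'' hV hB heq''.symm
        cases hs with
        | betaMu b c hS hcov => exact contra hcov
        | betaMut y c hS hval => exact hS rfl
        | betaMutNeed y c hcov hne hval => exact contra hcov
      | lnBind b K e0 =>
        simp only [Heap.fill] at hs
        have contra : Val .ln (.mu b (Heap.fill K (.cut V .ln (.covar a)))) → False := by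
          intro hval
          obtain ⟨H'', V'', hV'', hB'', heq''⟩ := val_ln_mu hval
          have hab := uniqCovar (csize (Heap.fill K (.cut V .ln (.covar a))) + 1)
            a K V b H'' V'' (Nat.lt_succ_self _) hV (fun h => hB (Or.inr h))
            hV'' hB'' heq''
          exact hB (Or.inl hab.symm)
        cases hs with
        | betaMu b' c hS hcov => exact hS rfl
        | betaMut y c hS hval => exact contra hval
        | betaMuConeed b' c hval hne hcov => exact contra hval
    | lvBind v z K' =>
      cases H with
      | hole => simp [Heap.fill] at heq
      | lvBind v' z' K =>
        simp only [Heap.fill, Cmd.cut.injEq, CoTm.mut.injEq] at heq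
        obtain ⟨rfl, -, rfl, hin⟩ := heq
        have hlt : csize (Heap.fill K (.cut V .ln (.covar a))) < n := by
          have := csize_lt_lv v' z' (Heap.fill K (.cut V .ln (.covar a)))
          simp only [Heap.fill] at hn
          omega
        exact ih a K V hlt hV hB K' d e' hin hs
      | lnBind b K e0 => simp [Heap.fill] at heq
    | lnBind b K' e0 =>
      cases H with
      | hole =>
        simp only [Heap.fill, Cmd.cut.injEq] at heq
        obtain ⟨hVeq, -, he⟩ := heq
        subst hVeq
        obtain ⟨H'', V'', hV'', hB'', heq''⟩ := val_ln_mu hV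
        have hlt : csize (Heap.fill H'' (.cut V'' .ln (.covar b))) < n := by
          have := csize_lt_ln b (Heap.fill K' d) (.covar a)
          simp only [Heap.fill] at hn
          rw [← heq'']
          omega
        exact ih b H'' V'' hlt hV'' hB'' K' d e' heq''.symm hs
      | lvBind v z K => simp [Heap.fill] at heq
      | lnBind b' K e =>
        simp only [Heap.fill, Cmd.cut.injEq, Tm.mu.injEq] at heq
        obtain ⟨⟨rfl, hin⟩, -, rfl⟩ := heq
        have hlt : csize (Heap.fill K (.cut V .ln (.covar a))) < n := by
          have := csize_lt_ln b' (Heap.fill K (.cut V .ln (.covar a))) e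
          simp only [Heap.fill] at hn
          omega
        exact ih a K V hlt hV (fun h => hB (Or.inr h)) K' d e' hin hs


/-- Head steps are deterministic. -/
theorem headDet {d e₁ e₂ : Cmd} (h₁ : HeadStep d e₁) (h₂ : HeadStep d e₂) : e₁ = e₂ := by
  cases h₁ with
  | betaMu a c hS hcov =>
    cases h₂ with
    | betaMu a' c' hS' hcov' => rfl
    | betaMut x' c' hS' hval =>
      cases hval with
      | pos hw => exact absurd hw IsW.not_mu
      | neg _ => exact absurd (coval_neg hcov) IsF.not_mut
      | lv hw => exact absurd hw IsW.not_mu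
      | lnW hw => exact absurd hw IsW.not_mu
      | lnMu _ _ _ => exact absurd rfl hS
    | betaMuConeed a' c' hval hne hcov' => exact absurd rfl hS
    | betaMutNeed x' c' hcov' hne hval => exact absurd (val_lv hval) IsW.not_mu
  | betaMut x c hS hval =>
    cases h₂ with
    | betaMu a' c' hS' hcov =>
      cases hval with
      | pos hw => exact absurd hw IsW.not_mu
      | neg _ => exact absurd (coval_neg hcov) IsF.not_mut
      | lv hw => exact absurd hw IsW.not_mu
      | lnW hw => exact absurd hw IsW.not_mu
      | lnMu _ _ _ => exact absurd rfl hS'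
    | betaMut x' c' hS' hval' => rfl
    | betaMuConeed a' c' hval' hne hcov => exact absurd (coval_ln hcov) IsF.not_mut
    | betaMutNeed x' c' hcov hne hval' => exact absurd rfl hS
  | betaMuConeed a c hval hne hcov =>
    cases h₂ with
    | betaMu a' c' hS' hcov' => exact absurd rfl hS'
    | betaMut x' c' hS' hval' => exact absurd (coval_ln hcov) IsF.not_mut
    | betaMuConeed a' c' hval' hne' hcov' => rfl
  | betaMutNeed x c hcov hne hval =>
    cases h₂ with
    | betaMu a' c' hS' hcov' => exact absurd (val_lv hval) IsW.not_mu
    | betaMut x' c' hS' hval' => exact absurd rfl hS'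
    | betaMutNeed x' c' hcov' hne' hval' => rfl
  | betaP F i Bs S tys cvs xs c hget hF hW =>
    cases h₂ with
    | betaP F' i' Bs' S' tys' cvs' xs' c' hget' hF' hW' =>
      rw [hget] at hget'
      simp only [Option.some.injEq, Branch.mk.injEq] at hget'
      obtain ⟨rfl, rfl, rfl, rfl⟩ := hget'
      rfl
  | betaQ F i Bs S tys xs cvs c hget hW hF =>
    cases h₂ with
    | betaQ F' i' Bs' S' tys' xs' cvs' c' hget' hW' hF' =>
      rw [hget] at hget'
      simp only [Option.some.injEq, Branch.mk.injEq] at hget'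
      obtain ⟨rfl, rfl, rfl, rfl⟩ := hget'
      rfl
  | betaPack B X y c hW =>
    cases h₂ with
    | betaPack B' X' y' c' hW' => rfl
  | betaSpec B X a c hF =>
    cases h₂ with
    | betaSpec B' X' a' c' hF' => rfl

theorem noHeadLv {v : Tm} {z : Nat} {K : Heap} {d e' : Cmd} (hs' : HeadStep d e')
    {e₂ : Cmd} (h : HeadStep (.cut v .lv (.mut z (K.fill d))) e₂) : False := by
  have contra : Coval .lv (.mut z (K.fill d)) → False := by
    intro hcov
    obtain ⟨H'', E'', hE'', hB'', heq''⟩ := coval_lv_mut hcov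
    exact noStepVar (csize (Heap.fill H'' (.cut (.var z) .lv E'')) + 1) z H'' E''
      (Nat.lt_succ_self _) hE'' hB'' K d e' heq''.symm hs'
  cases h with
  | betaMu a c hS hcov => exact contra hcov
  | betaMut x c hS hval => exact hS rfl
  | betaMutNeed x c hcov hne hval => exact contra hcov

theorem noHeadLn {b : Nat} {K : Heap} {e0 : CoTm} {d e' : Cmd} (hs' : HeadStep d e')
    {e₂ : Cmd} (h : HeadStep (.cut (.mu b (K.fill d)) .ln e0) e₂) : False := by
  have contra : Val .ln (.mu b (K.fill d)) → False := by
    intro hval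
    obtain ⟨H'', V'', hV'', hB'', heq''⟩ := val_ln_mu hval
    exact noStepCovar (csize (Heap.fill H'' (.cut V'' .ln (.covar b))) + 1) b H'' V''
      (Nat.lt_succ_self _) hV'' hB'' K d e' heq''.symm hs'
  cases h with
  | betaMu a c hS hcov => exact hS rfl
  | betaMut x c hS hval => exact contra hval
  | betaMuConeed a c hval hne hcov => exact contra hval

theorem fillDet : ∀ (n : Nat) (H₁ : Heap) (d₁ e₁ : Cmd) (H₂ : Heap) (d₂ e₂ : Cmd),
    csize (H₁.fill d₁) < n → HeadStep d₁ e₁ → HeadStep d₂ e₂ →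
    H₁.fill d₁ = H₂.fill d₂ → H₁.fill e₁ = H₂.fill e₂ := by
  intro n
  induction n with
  | zero => intro _ _ _ _ _ _ hn; omega
  | succ n ih =>
    intro H₁ d₁ e₁ H₂ d₂ e₂ hn h₁ h₂ heq
    cases H₁ with
    | hole =>
      cases H₂ with
      | hole =>
        simp only [Heap.fill] at heq ⊢
        subst heq
        exact headDet h₁ h₂
      | lvBind v z K =>
        simp only [Heap.fill] at heq
        subst heq
        exact (noHeadLv h₂ h₁).elim
      | lnBind b K e0 =>
        simp only [Heap.fill] at heq
        subst heq
        exact (noHeadLn h₂ h₁).elim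
    | lvBind v z K =>
      cases H₂ with
      | hole =>
        simp only [Heap.fill] at heq
        rw [← heq] at h₂
        exact (noHeadLv h₁ h₂).elim
      | lvBind v' z' K' =>
        simp only [Heap.fill, Cmd.cut.injEq, CoTm.mut.injEq] at heq
        obtain ⟨rfl, -, rfl, hin⟩ := heq
        have hlt : csize (Heap.fill K d₁) < n := by
          have := csize_lt_lv v z (Heap.fill K d₁)
          simp only [Heap.fill] at hn
          omega
        have hres := ih K d₁ e₁ K' d₂ e₂ hlt h₁ h₂ hin
        simp only [Heap.fill, hres]
      | lnBind b K' e0 => simp [Heap.fill] at heq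
    | lnBind b K e0 =>
      cases H₂ with
      | hole =>
        simp only [Heap.fill] at heq
        rw [← heq] at h₂
        exact (noHeadLn h₁ h₂).elim
      | lvBind v z K' => simp [Heap.fill] at heq
      | lnBind b' K' e0' =>
        simp only [Heap.fill, Cmd.cut.injEq, Tm.mu.injEq] at heq
        obtain ⟨⟨rfl, hin⟩, -, rfl⟩ := heq
        have hlt : csize (Heap.fill K d₁) < n := by
          have := csize_lt_ln b (Heap.fill K d₁) e0
          simp only [Heap.fill] at hn
          omega
        have hres := ih K d₁ e₁ K' d₂ e₂ hlt h₁ h₂ hin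
        simp only [Heap.fill, hres]

/-- the standard (operational) reduction of System D is
    deterministic. -/
theorem standard_reduction_deterministic :
    ∀ c c₁ c₂ : Cmd, Step c c₁ → Step c c₂ → c₁ = c₂ := by
  intro c c₁ c₂ h1 h2
  obtain ⟨H₁, d₁, e₁, hs₁, rfl, rfl⟩ := step_iff.mp h1
  obtain ⟨H₂, d₂, e₂, hs₂, heq, rfl⟩ := step_iff.mp h2
  exact fillDet (csize (H₁.fill d₁) + 1) H₁ d₁ e₁ H₂ d₂ e₂ (Nat.lt_succ_self _)
    hs₁ hs₂ heq

end SysD
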